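/- arXiv:2111.15131 — 2 statements merged into one kernel-verified Lean document; each statement's English description precedes it below -/
import Mathlib

section
/- Assume (A)² − |α_0|²|α_1|²⋯|α_{n−1}|² > 0, where A = (1/2)·α_0⋯α_{n−1}·tr(∏_{i=0}^{n−1} T_i(λ)), and let ζ^< = (A − sgn(A)√(A² − |α_0|²⋯|α_{n−1}|²))/(α_0⋯α_{n−1}). Then for any invertible 2×2 complex matrix T_+, the kernel of the matrix (∏_{i=0}^{n−1} T_i(λ) − ζ^<·I)·T_+ is exactly one-dimensional: dim ker((∏_{i=0}^{n−1} T_i(λ) − ζ^<·I)·T_+) = 1. -/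
open scoped Real

/-- The transfer matrix `T(λ) = (1/α)[[e^{i(λ−Δ)}, −β], [−conj β, e^{−i(λ−Δ)}]]`. -/
noncomputable def transferM (a b : ℂ) (d l : ℝ) : Matrix (Fin 2) (Fin 2) ℂ :=
  a⁻¹ • !![Complex.exp (Complex.I * (l - d)), -b;
           -(starRingEnd ℂ b), Complex.exp (-(Complex.I * (l - d)))]

/-- Ordered product `∏_{i=0}^{n-1} T_i = T_{n-1} ⋯ T_1 T_0`. -/
noncomputable def prodRev (T : ℕ → Matrix (Fin 2) (Fin 2) ℂ) : ℕ → Matrix (Fin 2) (Fin 2) ℂ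
  | 0 => 1
  | n + 1 => T n * prodRev T n

/-- `A = (1/2)·α_0⋯α_{n−1}·tr(∏_{i=0}^{n−1} T_i)` (a real number, taken via its real part). -/
noncomputable def Adef (αs : ℕ → ℂ) (Ts : ℕ → Matrix (Fin 2) (Fin 2) ℂ) (n : ℕ) : ℝ :=
  ((1 / 2 : ℂ) * (∏ i ∈ Finset.range n, αs i) * (prodRev Ts n).trace).re

/-- `ζ^< = (A − sgn(A)·√(A² − |α_0|²⋯|α_{n−1}|²))/(α_0⋯α_{n−1})`. -/
noncomputable def zetaLT (αs : ℕ → ℂ) (Ts : ℕ → Matrix (Fin 2) (Fin 2) ℂ) (n : ℕ) : ℂ :=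
  ((Adef αs Ts n : ℂ) -
      ((Real.sign (Adef αs Ts n) *
        Real.sqrt ((Adef αs Ts n) ^ 2 - ∏ i ∈ Finset.range n, ‖αs i‖ ^ 2) : ℝ) : ℂ)) /
    ∏ i ∈ Finset.range n, αs i

/-- `ζ^> = (A + sgn(A)·√(A² − |α_0|²⋯|α_{n−1}|²))/(α_0⋯α_{n−1})`. -/
noncomputable def zetaGT (αs : ℕ → ℂ) (Ts : ℕ → Matrix (Fin 2) (Fin 2) ℂ) (n : ℕ) : ℂ :=
  ((Adef αs Ts n : ℂ) +
      ((Real.sign (Adef αs Ts n) *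
        Real.sqrt ((Adef αs Ts n) ^ 2 - ∏ i ∈ Finset.range n, ‖αs i‖ ^ 2) : ℝ) : ℂ)) /
    ∏ i ∈ Finset.range n, αs i

lemma prodRev_smul (c : ℕ → ℂ) (S : ℕ → Matrix (Fin 2) (Fin 2) ℂ) (m : ℕ) :
    prodRev (fun k => c k • S k) m = (∏ i ∈ Finset.range m, c i) • prodRev S m := by
  induction m with
  | zero => simp [prodRev]
  | succ m ih =>
    rw [prodRev, prodRev, ih, Finset.prod_range_succ, smul_mul_assoc, Matrix.mul_smul,
      smul_smul, mul_comm]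

lemma prodRev_det (S : ℕ → Matrix (Fin 2) (Fin 2) ℂ) (m : ℕ) :
    (prodRev S m).det = ∏ i ∈ Finset.range m, (S i).det := by
  induction m with
  | zero => simp [prodRev]
  | succ m ih => rw [prodRev, Matrix.det_mul, ih, Finset.prod_range_succ, mul_comm]

lemma symP_mul_aux {M N : Matrix (Fin 2) (Fin 2) ℂ}
    (hM : M 1 0 = starRingEnd ℂ (M 0 1) ∧ M 1 1 = starRingEnd ℂ (M 0 0))
    (hN : N 1 0 = starRingEnd ℂ (N 0 1) ∧ N 1 1 = starRingEnd ℂ (N 0 0)) :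
    (M * N) 1 0 = starRingEnd ℂ ((M * N) 0 1) ∧
      (M * N) 1 1 = starRingEnd ℂ ((M * N) 0 0) := by
  constructor <;>
    simp [Matrix.mul_apply, Fin.sum_univ_two, hM.1, hM.2, hN.1, hN.2, map_add, map_mul,
      Complex.conj_conj] <;> ring

lemma symP_prodRev (S : ℕ → Matrix (Fin 2) (Fin 2) ℂ)
    (h : ∀ k, S k 1 0 = starRingEnd ℂ (S k 0 1) ∧ S k 1 1 = starRingEnd ℂ (S k 0 0)) (m : ℕ) :
    prodRev S m 1 0 = starRingEnd ℂ (prodRev S m 0 1) ∧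
      prodRev S m 1 1 = starRingEnd ℂ (prodRev S m 0 0) := by
  induction m with
  | zero => simp [prodRev, Matrix.one_apply]
  | succ m ih => exact symP_mul_aux (h m) ih

lemma aux_rank_one (K : Matrix (Fin 2) (Fin 2) ℂ) (hdet : K.det = 0) (hK : K ≠ 0) :
    Module.finrank ℂ (LinearMap.ker K.mulVecLin) = 1 := by
  have hsum := LinearMap.finrank_range_add_finrank_ker K.mulVecLin
  simp only [Module.finrank_fin_fun] at hsum
  have hker : 0 < Module.finrank ℂ (LinearMap.ker K.mulVecLin) := by
    obtain ⟨v, hv, hv0⟩ := (Matrix.exists_mulVec_eq_zero_iff).mpr hdet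
    have : v ∈ LinearMap.ker K.mulVecLin := by simpa [Matrix.mulVecLin] using hv0
    exact Module.finrank_pos_iff_exists_ne_zero.mpr ⟨⟨v, this⟩, by simpa using hv⟩
  have hrange : 0 < Module.finrank ℂ (LinearMap.range K.mulVecLin) := by
    rw [Module.finrank_pos_iff_exists_ne_zero]
    obtain ⟨i, hi⟩ := Function.ne_iff.mp hK
    obtain ⟨j, hj⟩ := Function.ne_iff.mp hi
    refine ⟨⟨K.mulVecLin (Pi.single j 1), LinearMap.mem_range_self _ _⟩, ?_⟩
    simp only [ne_eq, Submodule.mk_eq_zero]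
    intro h
    apply hj
    have := congrFun h i
    simpa [Matrix.mulVecLin, Matrix.mulVec_single] using this
  omega

/-- Assume `A² − |α_0|²⋯|α_{n−1}|² > 0`.  Then for any invertible 2×2 matrix `T_+`,
`dim ker((∏_{i=0}^{n−1} T_i(λ) − ζ^<·I)·T_+) = 1`. -/
theorem finrank_ker_eq_one
    (n : ℕ) (hn : 0 < n) (l : ℝ) (hl : 0 ≤ l ∧ l < 2 * π)
    (α β : ℕ → ℂ) (Δ : ℕ → ℝ)
    (hΔ : ∀ k < n, 0 ≤ Δ k ∧ Δ k < 2 * π)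
    (hα : ∀ k < n, α k ≠ 0)
    (hαβ : ∀ k < n, ‖α k‖ ^ 2 + ‖β k‖ ^ 2 = 1)
    (hpos :
      (Adef α (fun k => transferM (α k) (β k) (Δ k) l) n) ^ 2 -
        ∏ i ∈ Finset.range n, ‖α i‖ ^ 2 > 0)
    (Tplus : Matrix (Fin 2) (Fin 2) ℂ) (hTplus : IsUnit Tplus) :
    Module.finrank ℂ
      (LinearMap.ker
        ((prodRev (fun k => transferM (α k) (β k) (Δ k) l) n -
            zetaLT α (fun k => transferM (α k) (β k) (Δ k) l) n • 1) * Tplus).mulVecLin) = 1 := by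
  set S : ℕ → Matrix (Fin 2) (Fin 2) ℂ := fun k =>
    !![Complex.exp (Complex.I * (l - Δ k)), -β k;
       -(starRingEnd ℂ (β k)), Complex.exp (-(Complex.I * (l - Δ k)))] with hS
  set N : Matrix (Fin 2) (Fin 2) ℂ := prodRev S n with hN
  set A : ℝ := Adef α (fun k => transferM (α k) (β k) (Δ k) l) n with hA
  set D : ℝ := ∏ i ∈ Finset.range n, ‖α i‖ ^ 2 with hD
  set P : ℂ := ∏ i ∈ Finset.range n, α i with hP
  -- basic facts
  have hPne : P ≠ 0 := Finset.prod_ne_zero_iff.mpr fun i hi => hα i (Finset.mem_range.mp hi)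
  have hDpos : 0 < D := by
    refine Finset.prod_pos fun i hi => ?_
    exact pow_pos (norm_pos_iff.mpr (hα i (Finset.mem_range.mp hi))) 2
  have hAne : A ≠ 0 := by
    intro h
    rw [h] at hpos
    nlinarith
  have hsgn : Real.sign A = 1 ∨ Real.sign A = -1 := by
    rcases lt_or_gt_of_ne hAne with h | h
    · exact Or.inr (Real.sign_of_neg h)
    · exact Or.inl (Real.sign_of_pos h)
  have hsq : Real.sign A ^ 2 = 1 := by rcases hsgn with h | h <;> rw [h] <;> norm_num
  -- prodRev T = P⁻¹ • N
  have hprod : prodRev (fun k => transferM (α k) (β k) (Δ k) l) n =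
      (∏ i ∈ Finset.range n, (α i)⁻¹) • N := by
    rw [hN]
    exact prodRev_smul (fun k => (α k)⁻¹) S n
  have hPinv : (∏ i ∈ Finset.range n, (α i)⁻¹) = P⁻¹ := by
    rw [hP, ← Finset.prod_inv_distrib]
  -- symmetry of N
  have hsymN : N 1 0 = starRingEnd ℂ (N 0 1) ∧ N 1 1 = starRingEnd ℂ (N 0 0) := by
    rw [hN]
    refine symP_prodRev S ?_ n
    intro k
    have he : Complex.exp (-(Complex.I * ((l : ℂ) - (Δ k : ℂ)))) =
        starRingEnd ℂ (Complex.exp (Complex.I * ((l : ℂ) - (Δ k : ℂ)))) := by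
      rw [← Complex.exp_conj]
      congr 1
      simp [map_mul, Complex.conj_I]
    constructor <;> simp [hS, he]
  -- trace of N is real: N.trace = 2*A
  have htrN : N.trace = ((2 * A : ℝ) : ℂ) := by
    have h1 : N.trace = N 0 0 + starRingEnd ℂ (N 0 0) := by
      rw [Matrix.trace_fin_two, hsymN.2]
    have h2 : N.trace = ((2 * (N 0 0).re : ℝ) : ℂ) := by
      rw [h1, Complex.add_conj]
    have h3 : A = (N 0 0).re := by
      rw [hA, Adef, hprod, hPinv, Matrix.trace_smul, smul_eq_mul, ← hP]
      have heq : ((1 / 2 : ℂ) * P) * (P⁻¹ * N.trace) = (1 / 2 : ℂ) * N.trace := by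
        field_simp
      rw [heq, h2]
      push_cast
      simp
    rw [h2, h3]
  -- det of N
  have hdetN : N.det = ((D : ℝ) : ℂ) := by
    rw [hN, prodRev_det, hD]
    push_cast
    refine Finset.prod_congr rfl fun i hi => ?_
    have hi' := Finset.mem_range.mp hi
    have hb := hαβ i hi'
    simp only [hS, Matrix.det_fin_two_of]
    rw [← Complex.exp_add]
    have : Complex.I * (↑l - ↑(Δ i)) + -(Complex.I * (↑l - ↑(Δ i))) = 0 := by ring
    rw [this, Complex.exp_zero]
    have hbb : -β i * -starRingEnd ℂ (β i) = ((‖β i‖ ^ 2 : ℝ) : ℂ) := by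
      rw [neg_mul_neg, Complex.mul_conj]
      norm_cast
      rw [Complex.normSq_eq_norm_sq]
    rw [hbb]
    have : (‖β i‖ ^ 2 : ℝ) = 1 - ‖α i‖ ^ 2 := by linarith
    rw [this]
    push_cast
    simp
  -- the real eigenvalue candidate
  set μ : ℝ := A - Real.sign A * Real.sqrt (A ^ 2 - D) with hμ
  have hsqrtpos : 0 < Real.sqrt (A ^ 2 - D) := Real.sqrt_pos.mpr hpos
  have hμA : (μ - A) ^ 2 = A ^ 2 - D := by
    rw [hμ]
    have : (A - Real.sign A * Real.sqrt (A ^ 2 - D) - A) ^ 2 =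
        Real.sign A ^ 2 * Real.sqrt (A ^ 2 - D) ^ 2 := by ring
    rw [this, hsq, one_mul, Real.sq_sqrt (le_of_lt hpos)]
  have hμne : μ ≠ A := by
    intro h
    have : Real.sign A * Real.sqrt (A ^ 2 - D) = 0 := by
      rw [hμ] at h; linarith
    rcases mul_eq_zero.mp this with h' | h'
    · rcases hsgn with h'' | h'' <;> rw [h''] at h' <;> norm_num at h'
    · linarith
  -- zeta
  have hzeta : zetaLT α (fun k => transferM (α k) (β k) (Δ k) l) n = ((μ : ℝ) : ℂ) / P := by
    rw [zetaLT, hμ, ← hA, ← hD, ← hP]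
    push_cast
    ring_nf
  -- K0 = N - μ • 1
  set K0 : Matrix (Fin 2) (Fin 2) ℂ := N - ((μ : ℝ) : ℂ) • 1 with hK0
  have hdetK0 : K0.det = 0 := by
    have hexp : K0.det = N.det - ((μ : ℝ) : ℂ) * N.trace + ((μ : ℝ) : ℂ) ^ 2 := by
      rw [hK0]
      simp [Matrix.det_fin_two, Matrix.trace_fin_two, Matrix.sub_apply, Matrix.smul_apply,
        Matrix.one_apply]
      ring
    rw [hexp, hdetN, htrN]
    have : ((D : ℝ) : ℂ) - ((μ : ℝ) : ℂ) * ((2 * A : ℝ) : ℂ) + ((μ : ℝ) : ℂ) ^ 2 =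
        ((D - μ * (2 * A) + μ ^ 2 : ℝ) : ℂ) := by push_cast; ring
    rw [this]
    norm_cast
    nlinarith [hμA]
  have hK0ne : K0 ≠ 0 := by
    intro h
    have hNeq : N = ((μ : ℝ) : ℂ) • 1 := by
      have := sub_eq_zero.mp (by rw [← hK0]; exact h)
      exact this
    have : N.trace = ((μ : ℝ) : ℂ) * 2 := by
      rw [hNeq, Matrix.trace_smul, Matrix.trace_one]
      simp
    rw [htrN] at this
    have : (2 : ℝ) * A = μ * 2 := by
      have := congrArg Complex.re this
      simpa using this
    exact hμne (by linarith)
  -- the full matrix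
  have hKeq : prodRev (fun k => transferM (α k) (β k) (Δ k) l) n -
      zetaLT α (fun k => transferM (α k) (β k) (Δ k) l) n • 1 = P⁻¹ • K0 := by
    rw [hprod, hPinv, hzeta, hK0, smul_sub, smul_smul]
    congr 2
    rw [div_eq_mul_inv, mul_comm]
  set K1 : Matrix (Fin 2) (Fin 2) ℂ := P⁻¹ • K0 with hK1
  have hdetK1 : K1.det = 0 := by
    rw [hK1, Matrix.det_smul, hdetK0, mul_zero]
  have hK1ne : K1 ≠ 0 := by
    rw [hK1]
    intro h
    exact hK0ne ((smul_eq_zero_iff_right (inv_ne_zero hPne)).mp h)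
  rw [hKeq]
  apply aux_rank_one
  · rw [Matrix.det_mul, hdetK1, zero_mul]
  · intro h
    obtain ⟨U, hU⟩ := hTplus
    apply hK1ne
    calc K1 = K1 * Tplus * (↑U⁻¹ : Matrix (Fin 2) (Fin 2) ℂ) := by
          rw [← hU, Matrix.mul_assoc, Units.mul_inv, Matrix.mul_one]
      _ = 0 := by rw [h, Matrix.zero_mul]
end

section
/- (Lemma 1, part 1) Every eigenvalue of U is simple: for every λ ∈ [0,2π) with e^{iλ} ∈ σ(U), dim ker(U − e^{iλ}) = 1. -/
open scoped Real

/-- The coin matrix `C = e^{iΔ}[[α, β], [−conj β, conj α]]`. -/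
noncomputable def coinM (a b : ℂ) (d : ℝ) : Matrix (Fin 2) (Fin 2) ℂ :=
  Complex.exp (Complex.I * d) • !![a, b; -(starRingEnd ℂ b), starRingEnd ℂ a]

/-- Square-summability of `Ψ : ℤ → ℂ²`, i.e. `Σ_{x∈ℤ} ‖Ψ(x)‖²_{ℂ²} < ∞`. -/
def SqSummable (Ψ : ℤ → Fin 2 → ℂ) : Prop :=
  Summable fun x : ℤ => ‖Ψ x 0‖ ^ 2 + ‖Ψ x 1‖ ^ 2

/-- The time evolution `U = SC`:  `(UΨ)(x) = ((C_{x+1}Ψ(x+1))_L, (C_{x−1}Ψ(x−1))_R)ᵀ`. -/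
noncomputable def Uact (C : ℤ → Matrix (Fin 2) (Fin 2) ℂ) (Ψ : ℤ → Fin 2 → ℂ) :
    ℤ → Fin 2 → ℂ :=
  fun x => ![(C (x + 1)).mulVec (Ψ (x + 1)) 0, (C (x - 1)).mulVec (Ψ (x - 1)) 1]

/-- The inverse of the unitary `J`:  `(J⁻¹Ψ)(x) = (Ψ_L(x+1), Ψ_R(x))ᵀ`. -/
def JinvAct (Ψ : ℤ → Fin 2 → ℂ) : ℤ → Fin 2 → ℂ := fun x => ![Ψ (x + 1) 0, Ψ x 1]

/-- `T_{n−1} T_{n−2} ⋯ T_1 T_0` for matrices indexed by `ℤ`. -/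
noncomputable def prodZpos (T : ℤ → Matrix (Fin 2) (Fin 2) ℂ) :
    ℕ → Matrix (Fin 2) (Fin 2) ℂ
  | 0 => 1
  | n + 1 => T n * prodZpos T n

/-- `T_{−n}⁻¹ T_{−n+1}⁻¹ ⋯ T_{−2}⁻¹ T_{−1}⁻¹` for matrices indexed by `ℤ`. -/
noncomputable def prodZneg (T : ℤ → Matrix (Fin 2) (Fin 2) ℂ) :
    ℕ → Matrix (Fin 2) (Fin 2) ℂ
  | 0 => 1
  | n + 1 => (T (-(n + 1 : ℕ)))⁻¹ * prodZneg T n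

/-- The eigenspace `ker(U − c)` inside `ℓ²(ℤ;ℂ²)`, as a subspace of the space of
`ℂ²`-valued sequences. -/
noncomputable def eigSubmodule (C : ℤ → Matrix (Fin 2) (Fin 2) ℂ) (c : ℂ) :
    Submodule ℂ (ℤ → Fin 2 → ℂ) where
  carrier := {Ψ | SqSummable Ψ ∧ Uact C Ψ = c • Ψ}
  zero_mem' := by
    constructor
    · have h : (fun x : ℤ => ‖(0 : ℤ → Fin 2 → ℂ) x 0‖ ^ 2 + ‖(0 : ℤ → Fin 2 → ℂ) x 1‖ ^ 2) =
          fun _ => (0 : ℝ) := by funext x; simp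
      unfold SqSummable
      rw [h]
      exact summable_zero
    · funext x i
      fin_cases i <;> simp [Uact]
  add_mem' := by
    intro f g hf hg
    constructor
    · have hb : ∀ x : ℤ, ‖(f + g) x 0‖ ^ 2 + ‖(f + g) x 1‖ ^ 2 ≤
          2 * ((‖f x 0‖ ^ 2 + ‖f x 1‖ ^ 2) + (‖g x 0‖ ^ 2 + ‖g x 1‖ ^ 2)) := by
        intro x
        have h0 := norm_add_le (f x 0) (g x 0)
        have h1 := norm_add_le (f x 1) (g x 1)
        simp only [Pi.add_apply]
        nlinarith [norm_nonneg (f x 0), norm_nonneg (g x 0), norm_nonneg (f x 1),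
          norm_nonneg (g x 1), sq_nonneg (‖f x 0‖ - ‖g x 0‖), sq_nonneg (‖f x 1‖ - ‖g x 1‖),
          norm_nonneg (f x 0 + g x 0), norm_nonneg (f x 1 + g x 1)]
      exact Summable.of_nonneg_of_le (fun x => by positivity) hb ((hf.1.add hg.1).mul_left 2)
    · have hUadd : Uact C (f + g) = Uact C f + Uact C g := by
        funext x i
        fin_cases i <;> simp [Uact, Matrix.mulVec_add]
      rw [hUadd, hf.2, hg.2, ← smul_add]
  smul_mem' := by
    intro a f hf
    constructor
    · have h : (fun x : ℤ => ‖(a • f) x 0‖ ^ 2 + ‖(a • f) x 1‖ ^ 2) =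
          fun x : ℤ => ‖a‖ ^ 2 * (‖f x 0‖ ^ 2 + ‖f x 1‖ ^ 2) := by
        funext x
        simp [norm_smul, mul_pow, mul_add]
      unfold SqSummable
      rw [h]
      exact hf.1.mul_left _
    · have hUsmul : Uact C (a • f) = a • Uact C f := by
        funext x i
        fin_cases i <;> simp [Uact, Matrix.mulVec_smul]
      rw [hUsmul, hf.2, smul_comm]


section QWAux

lemma QW_conj_mul_self (z : ℂ) : (starRingEnd ℂ z) * z = ((‖z‖ ^ 2 : ℝ) : ℂ) := by
  rw [mul_comm, Complex.mul_conj, Complex.normSq_eq_norm_sq]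

lemma QW_coin_mulVec (a b : ℂ) (d : ℝ) (w : Fin 2 → ℂ) :
    (coinM a b d).mulVec w =
      ![Complex.exp (Complex.I * d) * (a * w 0 + b * w 1),
        Complex.exp (Complex.I * d) * (-(starRingEnd ℂ b) * w 0 + (starRingEnd ℂ a) * w 1)] := by
  funext i; fin_cases i <;>
    simp [coinM, Matrix.mulVec, dotProduct, Fin.sum_univ_two] <;> ring

lemma QW_transfer_mulVec (a b : ℂ) (d l : ℝ) (w : Fin 2 → ℂ) :
    (transferM a b d l).mulVec w =
      ![a⁻¹ * (Complex.exp (Complex.I * ((l:ℂ) - (d:ℂ))) * w 0 + (-b) * w 1),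
        a⁻¹ * (-(starRingEnd ℂ b) * w 0 + Complex.exp (-(Complex.I * ((l:ℂ) - (d:ℂ)))) * w 1)] := by
  funext i; fin_cases i <;>
    simp [transferM, Matrix.mulVec, dotProduct, Fin.sum_univ_two] <;> ring

lemma QW_transfer_det (a b : ℂ) (d l : ℝ) (ha : a ≠ 0)
    (hn : (starRingEnd ℂ a) * a + (starRingEnd ℂ b) * b = 1) :
    (transferM a b d l).det = starRingEnd ℂ a / a := by
  have hE : Complex.exp (Complex.I * ((l:ℂ)-(d:ℂ))) *
      Complex.exp (-(Complex.I * ((l:ℂ)-(d:ℂ)))) = 1 := by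
    rw [← Complex.exp_add]; simp
  simp only [transferM, Matrix.det_smul, Matrix.det_fin_two_of, Fintype.card_fin]
  field_simp
  linear_combination hE - hn

lemma QW_wronskian_step (a b : ℂ) (d l : ℝ) (ha : a ≠ 0)
    (hn : (starRingEnd ℂ a) * a + (starRingEnd ℂ b) * b = 1) (w w' : Fin 2 → ℂ) :
    ((transferM a b d l).mulVec w 0) * ((transferM a b d l).mulVec w' 1)
      - ((transferM a b d l).mulVec w 1) * ((transferM a b d l).mulVec w' 0)
      = (starRingEnd ℂ a / a) * (w 0 * w' 1 - w 1 * w' 0) := by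
  have hE : Complex.exp (Complex.I * ((l:ℂ)-(d:ℂ))) *
      Complex.exp (-(Complex.I * ((l:ℂ)-(d:ℂ)))) = 1 := by
    rw [← Complex.exp_add]; simp
  rw [QW_transfer_mulVec, QW_transfer_mulVec]
  simp only [Matrix.cons_val_zero, Matrix.cons_val_one, Matrix.head_cons]
  field_simp
  linear_combination (w 0 * w' 1 - w 1 * w' 0) * hE - (w 0 * w' 1 - w 1 * w' 0) * hn

lemma QW_eig_step (a b u v u' v1 : ℂ) (d l : ℝ) (ha : a ≠ 0)
    (hn : (starRingEnd ℂ a) * a + (starRingEnd ℂ b) * b = 1)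
    (E1 : Complex.exp (Complex.I * d) * (a * u + b * v) = Complex.exp (Complex.I * l) * u')
    (E2 : Complex.exp (Complex.I * d) * (-(starRingEnd ℂ b) * u + (starRingEnd ℂ a) * v)
        = Complex.exp (Complex.I * l) * v1) :
    u = a⁻¹ * (Complex.exp (Complex.I * ((l:ℂ) - (d:ℂ))) * u' + (-b) * v)
    ∧ v1 = a⁻¹ * (-(starRingEnd ℂ b) * u' + Complex.exp (-(Complex.I * ((l:ℂ) - (d:ℂ)))) * v) := by
  have hd : Complex.exp (Complex.I * ((l:ℂ) - (d:ℂ)))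
      = Complex.exp (Complex.I * l) / Complex.exp (Complex.I * d) := by
    rw [← Complex.exp_sub]; ring_nf
  have hd' : Complex.exp (-(Complex.I * ((l:ℂ) - (d:ℂ))))
      = Complex.exp (Complex.I * d) / Complex.exp (Complex.I * l) := by
    rw [← Complex.exp_sub]; ring_nf
  have hed : Complex.exp (Complex.I * (d:ℂ)) ≠ 0 := Complex.exp_ne_zero _
  have hel : Complex.exp (Complex.I * (l:ℂ)) ≠ 0 := Complex.exp_ne_zero _
  constructor
  · rw [hd]; field_simp; linear_combination E1
  · rw [hd']; field_simp
    linear_combination -a*E2 - (starRingEnd ℂ b)*E1 + Complex.exp (Complex.I*(d:ℂ))*v*hn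

lemma QW_eig_recur (α β : ℤ → ℂ) (Δ : ℤ → ℝ) (hα : ∀ x, α x ≠ 0)
    (hn : ∀ x, (starRingEnd ℂ (α x)) * α x + (starRingEnd ℂ (β x)) * β x = 1)
    (l : ℝ) (Ψ : ℤ → Fin 2 → ℂ)
    (hΨ : Uact (fun x => coinM (α x) (β x) (Δ x)) Ψ = Complex.exp (Complex.I * l) • Ψ)
    (x : ℤ) :
    ![Ψ x 0, Ψ (x+1) 1]
      = (transferM (α x) (β x) (Δ x) l).mulVec ![Ψ (x-1) 0, Ψ x 1] := by
  have h0 := congrFun (congrFun hΨ (x-1)) 0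
  have h1 := congrFun (congrFun hΨ (x+1)) 1
  simp only [Uact, Pi.smul_apply, smul_eq_mul, sub_add_cancel, add_sub_cancel_right,
    Matrix.cons_val_zero, Matrix.cons_val_one, Matrix.head_cons, QW_coin_mulVec] at h0 h1
  obtain ⟨hu, hv⟩ := QW_eig_step (α x) (β x) (Ψ x 0) (Ψ x 1) (Ψ (x-1) 0) (Ψ (x+1) 1)
    (Δ x) l (hα x) (hn x) h0 h1
  rw [QW_transfer_mulVec]
  funext i; fin_cases i
  · simpa using hu
  · simpa using hv

lemma QW_decay (Ψ : ℤ → Fin 2 → ℂ) (hs : SqSummable Ψ) (i : Fin 2) :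
    Filter.Tendsto (fun x : ℤ => ‖Ψ x i‖) Filter.cofinite (nhds 0) := by
  have h0 := hs.tendsto_cofinite_zero
  have hsq : Filter.Tendsto (fun x : ℤ => ‖Ψ x i‖ ^ 2) Filter.cofinite (nhds 0) := by
    apply tendsto_of_tendsto_of_tendsto_of_le_of_le tendsto_const_nhds h0
    · intro x; positivity
    · intro x
      fin_cases i
      · exact le_add_of_nonneg_right (by positivity)
      · exact le_add_of_nonneg_left (by positivity)
  have h2 := (Real.continuous_sqrt.tendsto 0).comp hsq
  simp only [Real.sqrt_zero] at h2
  have h3 : (Real.sqrt ∘ fun x : ℤ => ‖Ψ x i‖ ^ 2) = fun x : ℤ => ‖Ψ x i‖ := by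
    funext x; simp [Function.comp, Real.sqrt_sq (norm_nonneg _)]
  rwa [h3] at h2

end QWAux

/-- (Lemma 1, part 1)  Every eigenvalue of `U` is simple:  if `e^{iλ} ∈ σ(U)` then
`dim ker(U − e^{iλ}) = 1`. -/
theorem eigenvalue_simple
    (α β : ℤ → ℂ) (Δ : ℤ → ℝ)
    (hα : ∀ x, α x ≠ 0)
    (hαβ : ∀ x, ‖α x‖ ^ 2 + ‖β x‖ ^ 2 = 1)
    (hΔ : ∀ x, 0 ≤ Δ x ∧ Δ x < 2 * π)
    (xp xm : ℤ) (hxp : 0 ≤ xp) (hxm : xm ≤ 0)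
    (np nm : ℕ) (hnp : 0 < np) (hnm : 0 < nm)
    (αp βp : ℕ → ℂ) (Δp : ℕ → ℝ) (αm βm : ℕ → ℂ) (Δm : ℕ → ℝ)
    (hαp : ∀ k < np, αp k ≠ 0)
    (hαβp : ∀ k < np, ‖αp k‖ ^ 2 + ‖βp k‖ ^ 2 = 1)
    (hΔp : ∀ k < np, 0 ≤ Δp k ∧ Δp k < 2 * π)
    (hαm : ∀ k < nm, αm k ≠ 0)
    (hαβm : ∀ k < nm, ‖αm k‖ ^ 2 + ‖βm k‖ ^ 2 = 1)
    (hΔm : ∀ k < nm, 0 ≤ Δm k ∧ Δm k < 2 * π)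
    (hper_p : ∀ x : ℤ, xp ≤ x →
      α x = αp ((x - xp) % (np : ℤ)).toNat ∧ β x = βp ((x - xp) % (np : ℤ)).toNat ∧
        Δ x = Δp ((x - xp) % (np : ℤ)).toNat)
    (hper_m : ∀ x : ℤ, x < xm →
      α x = αm ((x - xm) % (nm : ℤ)).toNat ∧ β x = βm ((x - xm) % (nm : ℤ)).toNat ∧
        Δ x = Δm ((x - xm) % (nm : ℤ)).toNat)
    (l : ℝ) (hl : 0 ≤ l ∧ l < 2 * π)
    (hσ : ∃ Ψ : ℤ → Fin 2 → ℂ, SqSummable Ψ ∧ Ψ ≠ 0 ∧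
        Uact (fun x => coinM (α x) (β x) (Δ x)) Ψ = Complex.exp (Complex.I * l) • Ψ) :
    Module.rank ℂ
      (eigSubmodule (fun x => coinM (α x) (β x) (Δ x)) (Complex.exp (Complex.I * l))) = 1 := by
  
  classical
  obtain ⟨Ψ₀, hs0, hne0, heig0⟩ := hσ
  have hn : ∀ x, (starRingEnd ℂ (α x)) * α x + (starRingEnd ℂ (β x)) * β x = 1 := by
    intro x
    rw [QW_conj_mul_self, QW_conj_mul_self, ← Complex.ofReal_add, hαβ x, Complex.ofReal_one]
  -- a point where the transfer vector of Ψ₀ is nonzero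
  have hx0 : ∃ x₀ : ℤ, ¬(Ψ₀ x₀ 0 = 0 ∧ Ψ₀ (x₀+1) 1 = 0) := by
    by_contra h
    push_neg at h
    apply hne0
    funext x i
    fin_cases i
    · simpa using (h x).1
    · have h2 := (h (x-1)).2
      simp only [sub_add_cancel] at h2
      simpa using h2
  obtain ⟨x₀, hx₀⟩ := hx0
  have main : ∀ Ψ' : ℤ → Fin 2 → ℂ, SqSummable Ψ' →
      Uact (fun x => coinM (α x) (β x) (Δ x)) Ψ' = Complex.exp (Complex.I * l) • Ψ' →
      ∃ cc : ℂ, Ψ' = cc • Ψ₀ := by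
    intro Ψ' hs' heig'
    have hrec0 := QW_eig_recur α β Δ hα hn l Ψ₀ heig0
    have hrec' := QW_eig_recur α β Δ hα hn l Ψ' heig'
    set W : ℤ → ℂ := fun x => Ψ₀ x 0 * Ψ' (x+1) 1 - Ψ₀ (x+1) 1 * Ψ' x 0 with hWdef
    have hWstep : ∀ x : ℤ, W x = (starRingEnd ℂ (α x) / α x) * W (x-1) := by
      intro x
      have hws := QW_wronskian_step (α x) (β x) (Δ x) l (hα x) (hn x)
        ![Ψ₀ (x-1) 0, Ψ₀ x 1] ![Ψ' (x-1) 0, Ψ' x 1]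
      rw [← hrec0 x, ← hrec' x] at hws
      simp only [Matrix.cons_val_zero, Matrix.cons_val_one, Matrix.head_cons] at hws
      simp only [hWdef, sub_add_cancel]
      exact hws
    have hnorm1 : ∀ x : ℤ, ‖starRingEnd ℂ (α x) / α x‖ = 1 := by
      intro x
      rw [norm_div, RCLike.norm_conj, div_self (norm_ne_zero_iff.mpr (hα x))]
    have hstep' : ∀ x : ℤ, ‖W x‖ = ‖W (x-1)‖ := by
      intro x; rw [hWstep x, norm_mul, hnorm1, one_mul]
    have hWconst : ∀ x : ℤ, ‖W x‖ = ‖W 0‖ := by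
      intro x
      induction x using Int.induction_on with
      | zero => rfl
      | succ n ih =>
          have h2 := hstep' ((n : ℤ) + 1)
          simp only [add_sub_cancel_right] at h2
          rw [h2, ih]
      | pred n ih =>
          exact (hstep' (-(n : ℤ))).symm.trans ih
    have hshift : Filter.Tendsto (fun x : ℤ => x + 1) Filter.cofinite Filter.cofinite :=
      Function.Injective.tendsto_cofinite (fun a b h => by omega)
    have hWtend : Filter.Tendsto (fun x : ℤ => ‖W x‖) Filter.cofinite (nhds 0) := by
      have t1 := (QW_decay Ψ₀ hs0 0).mul ((QW_decay Ψ' hs' 1).comp hshift)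
      have t2 := ((QW_decay Ψ₀ hs0 1).comp hshift).mul (QW_decay Ψ' hs' 0)
      have tsum := t1.add t2
      simp only [mul_zero, zero_mul, add_zero, zero_add] at tsum
      apply tendsto_of_tendsto_of_tendsto_of_le_of_le tendsto_const_nhds tsum
      · intro x; positivity
      · intro x
        calc ‖W x‖ ≤ ‖Ψ₀ x 0 * Ψ' (x+1) 1‖ + ‖Ψ₀ (x+1) 1 * Ψ' x 0‖ := norm_sub_le _ _
          _ = ‖Ψ₀ x 0‖ * ‖Ψ' (x+1) 1‖ + ‖Ψ₀ (x+1) 1‖ * ‖Ψ' x 0‖ := by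
                rw [norm_mul, norm_mul]
          _ = _ := by simp [Function.comp]
    have hW0 : ‖W 0‖ = 0 := by
      have hconst : Filter.Tendsto (fun x : ℤ => ‖W x‖) Filter.cofinite (nhds (‖W 0‖)) := by
        have he : (fun x : ℤ => ‖W x‖) = fun _ => ‖W 0‖ := funext hWconst
        rw [he]; exact tendsto_const_nhds
      exact tendsto_nhds_unique hconst hWtend
    have hWzero : ∀ x, W x = 0 := by
      intro x
      have := hWconst x
      rw [hW0] at this
      exact norm_eq_zero.mp this
    -- pick the proportionality constant
    have hWx0 := hWzero x₀
    simp only [hWdef] at hWx0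
    have hcc : ∃ cc : ℂ, Ψ' x₀ 0 = cc * Ψ₀ x₀ 0 ∧ Ψ' (x₀+1) 1 = cc * Ψ₀ (x₀+1) 1 := by
      by_cases hu0 : Ψ₀ x₀ 0 ≠ 0
      · refine ⟨Ψ' x₀ 0 / Ψ₀ x₀ 0, by field_simp, ?_⟩
        field_simp
        linear_combination hWx0
      · push_neg at hu0
        have hv0 : Ψ₀ (x₀+1) 1 ≠ 0 := by
          intro hv; exact hx₀ ⟨hu0, hv⟩
        refine ⟨Ψ' (x₀+1) 1 / Ψ₀ (x₀+1) 1, ?_, by field_simp⟩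
        rw [hu0, mul_zero]
        have : Ψ₀ (x₀+1) 1 * Ψ' x₀ 0 = 0 := by
          rw [hu0] at hWx0; linear_combination -hWx0
        rcases mul_eq_zero.mp this with h | h
        · exact absurd h hv0
        · exact h
    obtain ⟨cc, hcc0, hcc1⟩ := hcc
    refine ⟨cc, ?_⟩
    -- the difference satisfies the recursion and vanishes at x₀
    set Θ : ℤ → Fin 2 → ℂ :=
      fun x => ![Ψ' x 0 - cc * Ψ₀ x 0, Ψ' (x+1) 1 - cc * Ψ₀ (x+1) 1] with hΘdef
    have hΘrec : ∀ x : ℤ, Θ x = (transferM (α x) (β x) (Δ x) l).mulVec (Θ (x-1)) := by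
      intro x
      have hsub : Θ (x-1) = (![Ψ' (x-1) 0, Ψ' x 1] : Fin 2 → ℂ) - cc • ![Ψ₀ (x-1) 0, Ψ₀ x 1] := by
        funext i; fin_cases i <;> simp [hΘdef, sub_add_cancel]
      rw [hsub, Matrix.mulVec_sub, Matrix.mulVec_smul, ← hrec0 x, ← hrec' x]
      funext i; fin_cases i <;> simp [hΘdef]
    have hΘx0 : Θ x₀ = 0 := by
      funext i; fin_cases i
      · simp [hΘdef, hcc0]
      · simp [hΘdef, hcc1]
    have hTinv : ∀ x : ℤ,
        (transferM (α x) (β x) (Δ x) l)⁻¹ * (transferM (α x) (β x) (Δ x) l) = 1 := by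
      intro x
      apply Matrix.nonsing_inv_mul
      rw [QW_transfer_det (α x) (β x) (Δ x) l (hα x) (hn x)]
      exact isUnit_iff_ne_zero.mpr (div_ne_zero (star_ne_zero.mpr (hα x)) (hα x))
    have hΘall : ∀ n : ℤ, Θ (x₀ + n) = 0 := by
      intro n
      induction n using Int.induction_on with
      | zero => simpa using hΘx0
      | succ n ih =>
          have h2 := hΘrec (x₀ + (n : ℤ) + 1)
          have h3 : x₀ + (n : ℤ) + 1 - 1 = x₀ + (n : ℤ) := by ring
          rw [h3, ih, Matrix.mulVec_zero] at h2
          rw [← add_assoc]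
          exact h2
      | pred n ih =>
          have h2 := hΘrec (x₀ + (-(n : ℤ)))
          rw [ih] at h2
          have h4 : Θ (x₀ + (-(n : ℤ)) - 1) = 0 := by
            have h5 := congrArg (fun v => (transferM (α (x₀ + (-(n : ℤ)))) (β (x₀ + (-(n : ℤ))))
              (Δ (x₀ + (-(n : ℤ)))) l)⁻¹.mulVec v) h2.symm
            simp only [Matrix.mulVec_mulVec, hTinv, Matrix.one_mulVec, Matrix.mulVec_zero] at h5
            exact h5
          have h6 : x₀ + (-(n : ℤ) - 1) = x₀ + (-(n : ℤ)) - 1 := by ring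
          rw [h6]
          exact h4
    have hΘ : ∀ x : ℤ, Θ x = 0 := by
      intro x
      have := hΘall (x - x₀)
      simpa using this
    funext x i
    fin_cases i
    · show Ψ' x 0 = (cc • Ψ₀) x 0
      have := congrFun (hΘ x) 0
      simp only [hΘdef, Matrix.cons_val_zero, Pi.zero_apply] at this
      simp only [Pi.smul_apply, smul_eq_mul]
      linear_combination this
    · show Ψ' x 1 = (cc • Ψ₀) x 1
      have := congrFun (hΘ (x-1)) 1
      simp only [hΘdef, Matrix.cons_val_one, Matrix.head_cons, Matrix.cons_val_zero, sub_add_cancel,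
        Pi.zero_apply] at this
      simp only [Pi.smul_apply, smul_eq_mul]
      linear_combination this
  have hspan : eigSubmodule (fun x => coinM (α x) (β x) (Δ x)) (Complex.exp (Complex.I * l))
      = Submodule.span ℂ {Ψ₀} := by
    apply le_antisymm
    · intro Ψ' hmem'
      have hs' : SqSummable Ψ' := hmem'.1
      have heig' := hmem'.2
      obtain ⟨cc, rfl⟩ := main Ψ' hs' heig'
      exact Submodule.smul_mem _ _ (Submodule.mem_span_singleton_self _)
    · rw [Submodule.span_le, Set.singleton_subset_iff]
      exact ⟨hs0, heig0⟩
  rw [hspan, rank_span_set (LinearIndepOn.singleton hne0), Cardinal.mk_singleton]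
end
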